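/- The expected ρ-derivative of the noisy-covariate negative log-likelihood at the true parameter equals the explicit bias term: E[∂L*/∂ρ (θ0)] = λ² λx² (β02ᵀ β02) tr(Ω0⁻¹ W S0ᵀ Ω0⁻¹). -/

import Mathlib

open MeasureTheory ProbabilityTheory Matrix
open scoped Matrix

namespace PSAR
/-- `S(ρ) = I_N − ρ W`. -/
noncomputable def Smat {N : ℕ} (W : Matrix (Fin N) (Fin N) ℝ) (ρ : ℝ) :
    Matrix (Fin N) (Fin N) ℝ :=
  1 - ρ • W

/-- `Ω(ρ, σ²) = σ² I_N + λ² S(ρ) S(ρ)ᵀ`. -/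
noncomputable def Omat {N : ℕ} (W : Matrix (Fin N) (Fin N) ℝ) (lam2 ρ σ2 : ℝ) :
    Matrix (Fin N) (Fin N) ℝ :=
  σ2 • (1 : Matrix (Fin N) (Fin N) ℝ) + lam2 • (Smat W ρ * (Smat W ρ)ᵀ)

/-- `𝕎S(ρ) = W S(ρ)ᵀ + S(ρ) Wᵀ`. -/
noncomputable def WSmat {N : ℕ} (W : Matrix (Fin N) (Fin N) ℝ) (ρ : ℝ) :
    Matrix (Fin N) (Fin N) ℝ :=
  W * (Smat W ρ)ᵀ + Smat W ρ * Wᵀ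

/-- `𝕎(ρ) = Wᵀ S(ρ) + S(ρ)ᵀ W` (least squares version). -/
noncomputable def WLSmat {N : ℕ} (W : Matrix (Fin N) (Fin N) ℝ) (ρ : ℝ) :
    Matrix (Fin N) (Fin N) ℝ :=
  Wᵀ * Smat W ρ + (Smat W ρ)ᵀ * W

/-- The negative log-likelihood
`L(θ) = −log det S(ρ) + (1/2) log det Ω(ρ,σ²) + (1/2)(S(ρ)Ys − Xβ)ᵀ Ω(ρ,σ²)⁻¹ (S(ρ)Ys − Xβ)`. -/
noncomputable def nll {N p1 p2 : ℕ} (W : Matrix (Fin N) (Fin N) ℝ) (lam2 : ℝ)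
    (X : Matrix (Fin N) (Fin p1 ⊕ Fin p2) ℝ) (Ys : Fin N → ℝ)
    (ρ : ℝ) (β : Fin p1 ⊕ Fin p2 → ℝ) (σ2 : ℝ) : ℝ :=
  - Real.log (Smat W ρ).det + (1 / 2) * Real.log (Omat W lam2 ρ σ2).det
    + (1 / 2) * ((Smat W ρ *ᵥ Ys - X *ᵥ β) ⬝ᵥ
        ((Omat W lam2 ρ σ2)⁻¹ *ᵥ (Smat W ρ *ᵥ Ys - X *ᵥ β)))

/-- Diagonal matrix `d(ρ)` with `d(ρ)_{ii} = 1/(S(ρ)ᵀ S(ρ))_{ii}`. -/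
noncomputable def dmat {N : ℕ} (W : Matrix (Fin N) (Fin N) ℝ) (ρ : ℝ) :
    Matrix (Fin N) (Fin N) ℝ :=
  Matrix.diagonal fun i => ((((Smat W ρ)ᵀ * Smat W ρ) i i)⁻¹)

/-- Entrywise first derivative `ḋ(ρ)` of `d(ρ)` in `ρ`. -/
noncomputable def dmatDot {N : ℕ} (W : Matrix (Fin N) (Fin N) ℝ) (ρ : ℝ) :
    Matrix (Fin N) (Fin N) ℝ :=
  Matrix.diagonal fun i => deriv (fun r => ((((Smat W r)ᵀ * Smat W r) i i)⁻¹)) ρ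

/-- Entrywise second derivative `d̈(ρ)` of `d(ρ)` in `ρ`. -/
noncomputable def dmatDDot {N : ℕ} (W : Matrix (Fin N) (Fin N) ℝ) (ρ : ℝ) :
    Matrix (Fin N) (Fin N) ℝ :=
  Matrix.diagonal fun i => deriv (deriv (fun r => ((((Smat W r)ᵀ * Smat W r) i i)⁻¹))) ρ

/-- Least squares objective `L_LS(γ) = ‖d(ρ) S(ρ)ᵀ (S(ρ)Y − Xβ)‖²`. -/
noncomputable def lsObj {N p1 p2 : ℕ} (W : Matrix (Fin N) (Fin N) ℝ)
    (X : Matrix (Fin N) (Fin p1 ⊕ Fin p2) ℝ) (Y : Fin N → ℝ)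
    (ρ : ℝ) (β : Fin p1 ⊕ Fin p2 → ℝ) : ℝ :=
  ((dmat W ρ * (Smat W ρ)ᵀ) *ᵥ (Smat W ρ *ᵥ Y - X *ᵥ β)) ⬝ᵥ
    ((dmat W ρ * (Smat W ρ)ᵀ) *ᵥ (Smat W ρ *ᵥ Y - X *ᵥ β))

/-- Observed response `Y* = S0⁻¹(Xβ0 + E) + ε`. -/
noncomputable def Yobs {N p1 p2 : ℕ} (W : Matrix (Fin N) (Fin N) ℝ) (ρ0 : ℝ)
    (X : Matrix (Fin N) (Fin p1 ⊕ Fin p2) ℝ) (β0 : Fin p1 ⊕ Fin p2 → ℝ)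
    (E ε : Fin N → ℝ) : Fin N → ℝ :=
  (Smat W ρ0)⁻¹ *ᵥ (X *ᵥ β0 + E) + ε

/-- True response `Y = S0⁻¹(Xβ0 + E)`. -/
noncomputable def Ytrue {N p1 p2 : ℕ} (W : Matrix (Fin N) (Fin N) ℝ) (ρ0 : ℝ)
    (X : Matrix (Fin N) (Fin p1 ⊕ Fin p2) ℝ) (β0 : Fin p1 ⊕ Fin p2 → ℝ)
    (E : Fin N → ℝ) : Fin N → ℝ :=
  (Smat W ρ0)⁻¹ *ᵥ (X *ᵥ β0 + E)

/-- Observed covariates `X* = (X1, X2 + Ex)`. -/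
noncomputable def Xobs {N p1 p2 : ℕ} (X : Matrix (Fin N) (Fin p1 ⊕ Fin p2) ℝ)
    (Ex : Fin N → Fin p2 → ℝ) : Matrix (Fin N) (Fin p1 ⊕ Fin p2) ℝ :=
  X + Matrix.of fun i j => Sum.elim (fun _ => (0 : ℝ)) (fun k => Ex i k) j

/-- All the noise entries of `E`, `ε`, `Ex` gathered as a single family. -/
def noiseFam {Ωs : Type*} {N p2 : ℕ} (E ε : Ωs → Fin N → ℝ)
    (Ex : Ωs → Fin N → Fin p2 → ℝ) :
    (Fin N ⊕ Fin N ⊕ Fin N × Fin p2) → Ωs → ℝ :=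
  fun z ω => Sum.elim (fun i => E ω i) (Sum.elim (fun i => ε ω i) (fun q => Ex ω q.1 q.2)) z




theorem hasDerivAt_det' {n : Type*} [Fintype n] [DecidableEq n]
    {M : ℝ → Matrix n n ℝ} {M' : Matrix n n ℝ} {x : ℝ}
    (h : ∀ i j, HasDerivAt (fun ρ => M ρ i j) (M' i j) x) :
    HasDerivAt (fun ρ => (M ρ).det) (((M x).adjugate * M').trace) x := by
  have H : ∀ σ : Equiv.Perm n, HasDerivAt (fun ρ => ∏ i, M ρ (σ i) i)
      (∑ i, (∏ j ∈ Finset.univ.erase i, M x (σ j) j) * M' (σ i) i) x := fun σ => by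
    simpa using HasDerivAt.fun_finsetProd (u := Finset.univ) (f := fun i ρ => M ρ (σ i) i)
      (f' := fun i => M' (σ i) i) (x := x) (fun i _ => h (σ i) i)
  have H2 : HasDerivAt (fun ρ => (M ρ).det)
      (∑ σ : Equiv.Perm n, (Equiv.Perm.sign σ : ℝ) *
        ∑ i, (∏ j ∈ Finset.univ.erase i, M x (σ j) j) * M' (σ i) i) x := by
    simp only [Matrix.det_apply']
    exact HasDerivAt.fun_sum fun σ _ => ((H σ).const_mul _)
  convert H2 using 1
  rw [Matrix.trace]
  have step1 : ∀ i, ((M x).adjugate * M').diag i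
      = ((M x).updateCol i (fun k => M' k i)).det := by
    intro i
    have := Matrix.cramer_eq_adjugate_mulVec (M x) (fun k => M' k i)
    have h2 : ((M x).adjugate *ᵥ fun k => M' k i) i = ((M x).adjugate * M').diag i := by
      simp [Matrix.mulVec, Matrix.mul_apply, Matrix.diag, dotProduct]
    rw [← h2, ← this, Matrix.cramer_apply]
  calc ∑ i, ((M x).adjugate * M').diag i
      = ∑ i, ∑ σ : Equiv.Perm n, (Equiv.Perm.sign σ : ℝ) *
          ((M' (σ i) i) * ∏ j ∈ Finset.univ.erase i, M x (σ j) j) := by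
        refine Finset.sum_congr rfl fun i _ => ?_
        rw [step1 i, Matrix.det_apply']
        refine Finset.sum_congr rfl fun σ _ => ?_
        congr 1
        rw [← Finset.mul_prod_erase _ _ (Finset.mem_univ i)]
        congr 1
        · simp [Matrix.updateCol_apply]
        · exact Finset.prod_congr rfl fun j hj => by
            simp [Matrix.updateCol_apply, Finset.ne_of_mem_erase hj]
    _ = ∑ σ : Equiv.Perm n, (Equiv.Perm.sign σ : ℝ) *
          ∑ i, (∏ j ∈ Finset.univ.erase i, M x (σ j) j) * M' (σ i) i := by
        rw [Finset.sum_comm]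
        refine Finset.sum_congr rfl fun σ _ => ?_
        rw [Finset.mul_sum]
        exact Finset.sum_congr rfl fun i _ => by ring

theorem hasDerivAt_inv_entry {n : Type*} [Fintype n] [DecidableEq n]
    {M : ℝ → Matrix n n ℝ} {M' : Matrix n n ℝ} {x : ℝ}
    (h : ∀ i j, HasDerivAt (fun ρ => M ρ i j) (M' i j) x)
    (hdet : (M x).det ≠ 0) (i j : n) :
    HasDerivAt (fun ρ => (M ρ)⁻¹ i j) ((-((M x)⁻¹ * M' * (M x)⁻¹)) i j) x := by
  have hdetD : ∀ y : ℝ, (∀ a b, DifferentiableAt ℝ (fun ρ => M ρ a b) y) →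
      DifferentiableAt ℝ (fun ρ => (M ρ).det) y := fun y hy =>
    (hasDerivAt_det' (fun a b => (hy a b).hasDerivAt)).differentiableAt
  -- differentiability of entries of the inverse
  have hadj : ∀ a b, DifferentiableAt ℝ (fun ρ => (M ρ).adjugate a b) x := by
    intro a b
    have : (fun ρ => (M ρ).adjugate a b)
        = fun ρ => ((M ρ).updateRow b (Pi.single a 1)).det := by
      funext ρ; rw [Matrix.adjugate_apply]
    rw [this]
    have hent : ∀ c d, HasDerivAt (fun ρ => ((M ρ).updateRow b (Pi.single a 1)) c d)
        ((fun c d => if c = b then (0:ℝ) else M' c d) c d) x := by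
      intro c d
      by_cases hc : c = b
      · simp only [Matrix.updateRow_apply, hc, if_pos rfl, if_true]
        exact hasDerivAt_const _ _
      · simp only [Matrix.updateRow_apply, if_neg hc]
        exact h c d
    exact (hasDerivAt_det' hent).differentiableAt
  have hinv_eq : ∀ a b, (fun ρ => (M ρ)⁻¹ a b)
      = fun ρ => ((M ρ).det)⁻¹ * (M ρ).adjugate a b := by
    intro a b; funext ρ
    rw [Matrix.inv_def, Ring.inverse_eq_inv', Matrix.smul_apply, smul_eq_mul]
  have hdiff : ∀ a b, DifferentiableAt ℝ (fun ρ => (M ρ)⁻¹ a b) x := by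
    intro a b
    rw [hinv_eq]
    exact (((hdetD x (fun a b => (h a b).differentiableAt)).inv hdet).mul (hadj a b))
  set G : Matrix n n ℝ := Matrix.of fun a b => deriv (fun ρ => (M ρ)⁻¹ a b) x with hGdef
  have hG : ∀ a b, HasDerivAt (fun ρ => (M ρ)⁻¹ a b) (G a b) x := fun a b =>
    (hdiff a b).hasDerivAt
  -- eventually invertible
  have hcont : ContinuousAt (fun ρ => (M ρ).det) x :=
    (hdetD x (fun a b => (h a b).differentiableAt)).continuousAt
  have hev : ∀ᶠ ρ in nhds x, (M ρ).det ≠ 0 := hcont.eventually_ne hdet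
  -- the defining equation
  have key : M' * (M x)⁻¹ + M x * G = 0 := by
    ext a b
    have h1 : HasDerivAt (fun ρ => ∑ k, M ρ a k * (M ρ)⁻¹ k b)
        ((M' * (M x)⁻¹ + M x * G) a b) x := by
      have := HasDerivAt.fun_sum (u := Finset.univ)
        (A := fun k ρ => M ρ a k * (M ρ)⁻¹ k b)
        (A' := fun k => M' a k * (M x)⁻¹ k b + M x a k * G k b)
        (fun k _ => (h a k).mul (hG k b))
      simpa [Matrix.add_apply, Matrix.mul_apply, Finset.sum_add_distrib] using this
    have h2 : (fun ρ => ∑ k, M ρ a k * (M ρ)⁻¹ k b) =ᶠ[nhds x]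
        fun _ => (1 : Matrix n n ℝ) a b := by
      filter_upwards [hev] with ρ hρ
      have : (M ρ) * (M ρ)⁻¹ = 1 := Matrix.mul_nonsing_inv _ (isUnit_iff_ne_zero.mpr hρ)
      calc ∑ k, M ρ a k * (M ρ)⁻¹ k b = ((M ρ) * (M ρ)⁻¹) a b := by
            rw [Matrix.mul_apply]
        _ = (1 : Matrix n n ℝ) a b := by rw [this]
    have h3 : HasDerivAt (fun ρ => ∑ k, M ρ a k * (M ρ)⁻¹ k b) 0 x :=
      (hasDerivAt_const x ((1 : Matrix n n ℝ) a b)).congr_of_eventuallyEq h2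
    have := h1.unique h3
    simpa [Matrix.zero_apply] using this
  have hunit : IsUnit (M x).det := isUnit_iff_ne_zero.mpr hdet
  have hMG : M x * G = -(M' * (M x)⁻¹) := by
    rw [add_comm] at key
    exact eq_neg_of_add_eq_zero_left key
  have hGval : G = -((M x)⁻¹ * M' * (M x)⁻¹) := by
    calc G = ((M x)⁻¹ * (M x)) * G := by rw [Matrix.nonsing_inv_mul _ hunit, Matrix.one_mul]
      _ = (M x)⁻¹ * (M x * G) := by rw [Matrix.mul_assoc]
      _ = (M x)⁻¹ * -(M' * (M x)⁻¹) := by rw [hMG]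
      _ = -((M x)⁻¹ * M' * (M x)⁻¹) := by rw [Matrix.mul_neg, Matrix.mul_assoc]
  rw [← hGval]
  exact hG i j

theorem hasDerivAt_quad {n : Type*} [Fintype n]
    {r : ℝ → n → ℝ} {r' : n → ℝ} {Q : ℝ → Matrix n n ℝ} {Q' : Matrix n n ℝ} {x : ℝ}
    (hr : ∀ i, HasDerivAt (fun ρ => r ρ i) (r' i) x)
    (hQ : ∀ i j, HasDerivAt (fun ρ => Q ρ i j) (Q' i j) x) :
    HasDerivAt (fun ρ => r ρ ⬝ᵥ (Q ρ *ᵥ r ρ))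
      (r' ⬝ᵥ (Q x *ᵥ r x) + r x ⬝ᵥ (Q' *ᵥ r x) + r x ⬝ᵥ (Q x *ᵥ r')) x := by
  have H : HasDerivAt (fun ρ => ∑ i, r ρ i * ∑ j, Q ρ i j * r ρ j)
      (∑ i, (r' i * ∑ j, Q x i j * r x j
        + r x i * ∑ j, (Q' i j * r x j + Q x i j * r' j))) x := by
    refine HasDerivAt.fun_sum fun i _ => ?_
    exact (hr i).mul (HasDerivAt.fun_sum fun j _ => (hQ i j).mul (hr j))
  have heq : (fun ρ => r ρ ⬝ᵥ (Q ρ *ᵥ r ρ))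
      = fun ρ => ∑ i, r ρ i * ∑ j, Q ρ i j * r ρ j := by
    funext ρ; simp [dotProduct, Matrix.mulVec]
  rw [heq]
  refine H.congr_deriv (Eq.symm ?_)
  simp only [dotProduct, Matrix.mulVec, Finset.sum_add_distrib, Finset.mul_sum, mul_add]
  rw [add_assoc]


variable {N p1 p2 : ℕ}

lemma hasDerivAt_Smat_entry (W : Matrix (Fin N) (Fin N) ℝ) (ρ0 : ℝ) (i j : Fin N) :
    HasDerivAt (fun ρ => Smat W ρ i j) (-W i j) ρ0 := by
  have h : (fun ρ => Smat W ρ i j)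
      = fun ρ => (1 : Matrix (Fin N) (Fin N) ℝ) i j - ρ * W i j := by
    funext ρ; simp [Smat, Matrix.sub_apply, Matrix.smul_apply, smul_eq_mul]
  rw [h]
  simpa using ((hasDerivAt_id ρ0).mul_const (W i j)).const_sub
    ((1 : Matrix (Fin N) (Fin N) ℝ) i j)

lemma hasDerivAt_Omat_entry (W : Matrix (Fin N) (Fin N) ℝ) (lam2 σ02 ρ0 : ℝ) (i j : Fin N) :
    HasDerivAt (fun ρ => Omat W lam2 ρ σ02 i j) (((-lam2) • WSmat W ρ0) i j) ρ0 := by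
  have h : (fun ρ => Omat W lam2 ρ σ02 i j)
      = fun ρ => σ02 * (1 : Matrix (Fin N) (Fin N) ℝ) i j
          + lam2 * ∑ k, Smat W ρ i k * Smat W ρ j k := by
    funext ρ
    simp [Omat, Matrix.add_apply, Matrix.smul_apply, smul_eq_mul, Matrix.mul_apply,
      Matrix.transpose_apply]
  rw [h]
  have H : HasDerivAt (fun ρ => ∑ k, Smat W ρ i k * Smat W ρ j k)
      (∑ k, ((-W i k) * Smat W ρ0 j k + Smat W ρ0 i k * (-W j k))) ρ0 :=
    HasDerivAt.fun_sum fun k _ =>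
      (hasDerivAt_Smat_entry W ρ0 i k).mul (hasDerivAt_Smat_entry W ρ0 j k)
  have := (H.const_mul lam2).const_add (σ02 * (1 : Matrix (Fin N) (Fin N) ℝ) i j)
  refine this.congr_deriv (Eq.symm ?_)
  simp only [WSmat, Matrix.smul_apply, Matrix.add_apply, Matrix.mul_apply,
    Matrix.transpose_apply, smul_eq_mul, Finset.mul_sum, Finset.sum_add_distrib]
  ring_nf
  simp only [neg_mul, mul_neg, Finset.sum_neg_distrib]
  ring

lemma Omat_posDef (W : Matrix (Fin N) (Fin N) ℝ) {lam2 σ02 : ℝ}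
    (hlam : 0 < lam2) (hσ : 0 < σ02) (ρ : ℝ) : (Omat W lam2 ρ σ02).PosDef := by
  rw [Matrix.posDef_iff_dotProduct_mulVec]
  constructor
  · show _ = _
    rw [Matrix.conjTranspose_eq_transpose_of_trivial]
    simp [Omat, Matrix.transpose_add, Matrix.transpose_smul, Matrix.transpose_mul,
      Matrix.transpose_one, Matrix.transpose_transpose]
  · intro x hx
    have hsx : star x = x := by funext i; simp
    rw [hsx]
    have hexp : x ⬝ᵥ (Omat W lam2 ρ σ02 *ᵥ x)
        = σ02 * (x ⬝ᵥ x) + lam2 * (((Smat W ρ)ᵀ *ᵥ x) ⬝ᵥ ((Smat W ρ)ᵀ *ᵥ x)) := by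
      rw [Omat, Matrix.add_mulVec, Matrix.smul_mulVec, Matrix.smul_mulVec,
        Matrix.one_mulVec, dotProduct_add, dotProduct_smul, dotProduct_smul,
        ← Matrix.mulVec_mulVec, Matrix.dotProduct_mulVec x (Smat W ρ), smul_eq_mul,
        smul_eq_mul, ← Matrix.mulVec_transpose]
    rw [hexp]
    have h1 : 0 < x ⬝ᵥ x := by
      obtain ⟨i, hi⟩ := Function.ne_iff.mp hx
      refine Finset.sum_pos' (fun k _ => mul_self_nonneg _) ⟨i, Finset.mem_univ i, ?_⟩
      exact mul_self_pos.mpr hi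
    have h2 : 0 ≤ ((Smat W ρ)ᵀ *ᵥ x) ⬝ᵥ ((Smat W ρ)ᵀ *ᵥ x) :=
      Finset.sum_nonneg fun k _ => mul_self_nonneg _
    exact add_pos_of_pos_of_nonneg (mul_pos hσ h1) (mul_nonneg hlam.le h2)


lemma adj_smul {n : Type*} [Fintype n] [DecidableEq n] (A : Matrix n n ℝ) (h : A.det ≠ 0) :
    A.adjugate = A.det • A⁻¹ := by
  rw [Matrix.inv_def, Ring.inverse_eq_inv', smul_smul, mul_inv_cancel₀ h, one_smul]

lemma nll_hasDerivAt (W : Matrix (Fin N) (Fin N) ℝ)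
    (Xs : Matrix (Fin N) (Fin p1 ⊕ Fin p2) ℝ) (Ys : Fin N → ℝ)
    (β0 : Fin p1 ⊕ Fin p2 → ℝ) {ρ0 σ02 lam2 : ℝ}
    (hσ : 0 < σ02) (hlam : 0 < lam2) (hS0 : 0 < (Smat W ρ0).det) :
    HasDerivAt (fun ρ => nll W lam2 Xs Ys ρ β0 σ02)
      ( ((Smat W ρ0)⁻¹ * W).trace
        - (lam2 / 2) * ((Omat W lam2 ρ0 σ02)⁻¹ * WSmat W ρ0).trace
        + ((-(W *ᵥ Ys)) ⬝ᵥ ((Omat W lam2 ρ0 σ02)⁻¹ *ᵥ (Smat W ρ0 *ᵥ Ys - Xs *ᵥ β0))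
        + (lam2 / 2) * ((Smat W ρ0 *ᵥ Ys - Xs *ᵥ β0) ⬝ᵥ
            (((Omat W lam2 ρ0 σ02)⁻¹ * WSmat W ρ0 * (Omat W lam2 ρ0 σ02)⁻¹) *ᵥ
              (Smat W ρ0 *ᵥ Ys - Xs *ᵥ β0))))) ρ0 := by
  set S0 := Smat W ρ0 with hS0def
  set O0 := Omat W lam2 ρ0 σ02 with hO0def
  have hSdet : S0.det ≠ 0 := hS0.ne'
  have hΩpd : O0.PosDef := Omat_posDef W hlam hσ ρ0
  have hΩdet : O0.det ≠ 0 := hΩpd.det_pos.ne'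
  have hΩsym : O0ᵀ = O0 := by
    have := hΩpd.1
    rwa [Matrix.IsHermitian, Matrix.conjTranspose_eq_transpose_of_trivial] at this
  have hΩisym : (O0⁻¹)ᵀ = O0⁻¹ := by rw [Matrix.transpose_nonsing_inv, hΩsym]
  -- term 1
  have hdetS : HasDerivAt (fun ρ => (Smat W ρ).det) ((S0.adjugate * (-W)).trace) ρ0 :=
    hasDerivAt_det' (fun i j => by simpa using hasDerivAt_Smat_entry W ρ0 i j)
  have hT1 : HasDerivAt (fun ρ => -Real.log (Smat W ρ).det) (((S0)⁻¹ * W).trace) ρ0 := by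
    have h := (hdetS.log hSdet).neg
    refine h.congr_deriv (Eq.symm ?_)
    rw [adj_smul _ hSdet, Matrix.smul_mul, Matrix.trace_smul, Matrix.mul_neg,
      Matrix.trace_neg]
    rw [← hS0def, smul_eq_mul]
    field_simp
  -- term 2
  have hdetΩ : HasDerivAt (fun ρ => (Omat W lam2 ρ σ02).det)
      ((O0.adjugate * ((-lam2) • WSmat W ρ0)).trace) ρ0 :=
    hasDerivAt_det' (fun i j => hasDerivAt_Omat_entry W lam2 σ02 ρ0 i j)
  have hT2 : HasDerivAt (fun ρ => (1/2 : ℝ) * Real.log (Omat W lam2 ρ σ02).det)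
      (-((lam2 / 2) * ((O0)⁻¹ * WSmat W ρ0).trace)) ρ0 := by
    have h := (hdetΩ.log hΩdet).const_mul (1/2 : ℝ)
    refine h.congr_deriv (Eq.symm ?_)
    rw [adj_smul _ hΩdet, Matrix.smul_mul, Matrix.trace_smul, Matrix.mul_smul,
      Matrix.trace_smul]
    rw [← hO0def]
    field_simp
    ring
  -- term 3
  have hr : ∀ i, HasDerivAt (fun ρ => (Smat W ρ *ᵥ Ys - Xs *ᵥ β0) i)
      ((-(W *ᵥ Ys)) i) ρ0 := by
    intro i
    have h : (fun ρ => (Smat W ρ *ᵥ Ys - Xs *ᵥ β0) i)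
        = fun ρ => (∑ j, Smat W ρ i j * Ys j) - (Xs *ᵥ β0) i := by
      funext ρ; simp [Matrix.mulVec, dotProduct]
    rw [h]
    have := (HasDerivAt.fun_sum (u := Finset.univ)
      (A := fun j ρ => Smat W ρ i j * Ys j) (A' := fun j => -W i j * Ys j)
      (fun j _ => (hasDerivAt_Smat_entry W ρ0 i j).mul_const (Ys j))).sub_const
      ((Xs *ᵥ β0) i)
    refine this.congr_deriv (Eq.symm ?_)
    simp [Matrix.mulVec, dotProduct, Finset.sum_neg_distrib]
  have hq : ∀ i j, HasDerivAt (fun ρ => (Omat W lam2 ρ σ02)⁻¹ i j)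
      ((lam2 • ((O0)⁻¹ * WSmat W ρ0 * (O0)⁻¹)) i j) ρ0 := by
    intro i j
    have h := hasDerivAt_inv_entry (M := fun ρ => Omat W lam2 ρ σ02)
      (M' := (-lam2) • WSmat W ρ0) (x := ρ0)
      (fun i j => hasDerivAt_Omat_entry W lam2 σ02 ρ0 i j) hΩdet i j
    have e : -((Omat W lam2 ρ0 σ02)⁻¹ * (-lam2) • WSmat W ρ0 * (Omat W lam2 ρ0 σ02)⁻¹)
        = lam2 • ((O0)⁻¹ * WSmat W ρ0 * (O0)⁻¹) := by
      rw [Matrix.mul_smul, Matrix.smul_mul, neg_smul, neg_neg, hO0def]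
    rw [← e]; exact h
  have hswap : (Smat W ρ0 *ᵥ Ys - Xs *ᵥ β0) ⬝ᵥ ((O0)⁻¹ *ᵥ (-(W *ᵥ Ys)))
      = (-(W *ᵥ Ys)) ⬝ᵥ ((O0)⁻¹ *ᵥ (Smat W ρ0 *ᵥ Ys - Xs *ᵥ β0)) := by
    rw [Matrix.dotProduct_mulVec, ← Matrix.mulVec_transpose, hΩisym, dotProduct_comm]
  have hT3 : HasDerivAt (fun ρ => (1/2 : ℝ) * ((Smat W ρ *ᵥ Ys - Xs *ᵥ β0) ⬝ᵥ
        ((Omat W lam2 ρ σ02)⁻¹ *ᵥ (Smat W ρ *ᵥ Ys - Xs *ᵥ β0))))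
      ((-(W *ᵥ Ys)) ⬝ᵥ ((O0)⁻¹ *ᵥ (Smat W ρ0 *ᵥ Ys - Xs *ᵥ β0))
        + (lam2 / 2) * ((Smat W ρ0 *ᵥ Ys - Xs *ᵥ β0) ⬝ᵥ
            (((O0)⁻¹ * WSmat W ρ0 * (O0)⁻¹) *ᵥ (Smat W ρ0 *ᵥ Ys - Xs *ᵥ β0)))) ρ0 := by
    have h := (hasDerivAt_quad (r := fun ρ => Smat W ρ *ᵥ Ys - Xs *ᵥ β0)
      (r' := -(W *ᵥ Ys)) (Q := fun ρ => (Omat W lam2 ρ σ02)⁻¹)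
      (Q' := lam2 • ((O0)⁻¹ * WSmat W ρ0 * (O0)⁻¹)) hr hq).const_mul (1/2 : ℝ)
    refine h.congr_deriv (Eq.symm ?_)
    rw [← hO0def, Matrix.smul_mulVec, dotProduct_smul, smul_eq_mul, hswap]
    ring
  have hsum := (hT1.add hT2).add hT3
  exact hsum


section Integration
variable {Ωs : Type*} [MeasurableSpace Ωs] {μ : Measure Ωs} [IsProbabilityMeasure μ]
  {I : Type*} [Fintype I] {ζ : I → Ωs → ℝ}

lemma memLp_mul_int (hf : ∀ z, MemLp (ζ z) 2 μ) (z w : I) :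
    Integrable (fun ω => ζ z ω * ζ w ω) μ := by
  have h2 : (1:ENNReal)/1 = 1/2 + 1/2 := by
    simp only [one_div, inv_one]; rw [ENNReal.inv_two_add_inv_two]
  have := (hf z).integrable_mul (hf w)
  exact this

lemma integrable_affine_mul (hf : ∀ z, MemLp (ζ z) 2 μ) (a b : I → ℝ) (ca cb : ℝ) :
    Integrable (fun ω => (ca + ∑ z, a z * ζ z ω) * (cb + ∑ z, b z * ζ z ω)) μ := by
  classical
  have hint : ∀ z : I, Integrable (ζ z) μ := fun z => (hf z).integrable one_le_two
  have hAint : Integrable (fun ω => ∑ z, a z * ζ z ω) μ :=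
    integrable_finset_sum _ (fun z _ => (hint z).const_mul _)
  have hBint : Integrable (fun ω => ∑ z, b z * ζ z ω) μ :=
    integrable_finset_sum _ (fun z _ => (hint z).const_mul _)
  have hABint : Integrable (fun ω => (∑ z, a z * ζ z ω) * (∑ z, b z * ζ z ω)) μ := by
    have he : (fun ω => (∑ z, a z * ζ z ω) * (∑ z, b z * ζ z ω))
        = fun ω => ∑ z, ∑ w, (a z * b w) * (ζ z ω * ζ w ω) := by
      funext ω
      rw [Finset.sum_mul_sum]
      exact Finset.sum_congr rfl fun z _ => Finset.sum_congr rfl fun w _ => by ring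
    rw [he]
    exact integrable_finset_sum _ fun z _ =>
      integrable_finset_sum _ fun w _ => ((memLp_mul_int hf z w).const_mul _)
  have he2 : (fun ω => (ca + ∑ z, a z * ζ z ω) * (cb + ∑ z, b z * ζ z ω))
      = fun ω => ca * cb + (ca * ∑ z, b z * ζ z ω
          + (cb * ∑ z, a z * ζ z ω + (∑ z, a z * ζ z ω) * (∑ z, b z * ζ z ω))) := by
    funext ω; ring
  rw [he2]
  exact (integrable_const _).add ((hBint.const_mul ca).add ((hAint.const_mul cb).add hABint))

lemma integral_affine_mul (hindep : iIndepFun ζ μ)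
    (hf : ∀ z, MemLp (ζ z) 2 μ) (hmean : ∀ z, ∫ ω, ζ z ω ∂μ = 0)
    (a b : I → ℝ) (ca cb : ℝ) :
    ∫ ω, (ca + ∑ z, a z * ζ z ω) * (cb + ∑ z, b z * ζ z ω) ∂μ
      = ca * cb + ∑ z, a z * b z * (∫ ω, (ζ z ω)^2 ∂μ) := by
  classical
  have hint : ∀ z : I, Integrable (ζ z) μ := fun z => (hf z).integrable one_le_two
  have hAint : Integrable (fun ω => ∑ z, a z * ζ z ω) μ :=
    integrable_finset_sum _ (fun z _ => (hint z).const_mul _)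
  have hBint : Integrable (fun ω => ∑ z, b z * ζ z ω) μ :=
    integrable_finset_sum _ (fun z _ => (hint z).const_mul _)
  have hIA : ∫ ω, (∑ z, a z * ζ z ω) ∂μ = 0 := by
    rw [integral_finset_sum _ (fun z _ => (hint z).const_mul _)]
    simp only [integral_const_mul]
    simp [hmean]
  have hIB : ∫ ω, (∑ z, b z * ζ z ω) ∂μ = 0 := by
    rw [integral_finset_sum _ (fun z _ => (hint z).const_mul _)]
    simp only [integral_const_mul]
    simp [hmean]
  have hoff : ∀ z w : I, z ≠ w → ∫ ω, ζ z ω * ζ w ω ∂μ = 0 := by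
    intro z w hzw
    have h := (hindep.indepFun hzw).integral_mul_eq_mul_integral (hf z).1 (hf w).1
    have h2 : ∫ ω, ζ z ω * ζ w ω ∂μ = (∫ ω, ζ z ω ∂μ) * (∫ ω, ζ w ω ∂μ) := by
      simpa [Pi.mul_apply] using h
    rw [h2, hmean z, zero_mul]
  have hABint' : ∀ (z : I), Integrable (fun ω => ∑ w, (a z * b w) * (ζ z ω * ζ w ω)) μ :=
    fun z => integrable_finset_sum _ fun w _ => ((memLp_mul_int hf z w).const_mul _)
  have hIAB : ∫ ω, (∑ z, a z * ζ z ω) * (∑ z, b z * ζ z ω) ∂μ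
      = ∑ z, a z * b z * (∫ ω, (ζ z ω)^2 ∂μ) := by
    have he : (fun ω => (∑ z, a z * ζ z ω) * (∑ z, b z * ζ z ω))
        = fun ω => ∑ z, ∑ w, (a z * b w) * (ζ z ω * ζ w ω) := by
      funext ω
      rw [Finset.sum_mul_sum]
      exact Finset.sum_congr rfl fun z _ => Finset.sum_congr rfl fun w _ => by ring
    rw [he, integral_finset_sum _ (fun z _ => hABint' z)]
    refine Finset.sum_congr rfl fun z _ => ?_
    rw [integral_finset_sum _ (fun w _ => ((memLp_mul_int hf z w).const_mul _))]
    rw [Finset.sum_eq_single_of_mem z (Finset.mem_univ z)]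
    · rw [integral_const_mul]
      congr 1
      exact integral_congr_ae (Filter.Eventually.of_forall fun ω => by simp [pow_two])
    · intro w _ hwz
      rw [integral_const_mul, hoff z w (fun h => hwz h.symm), mul_zero]
  have he2 : (fun ω => (ca + ∑ z, a z * ζ z ω) * (cb + ∑ z, b z * ζ z ω))
      = fun ω => ca * cb + (ca * ∑ z, b z * ζ z ω
          + (cb * ∑ z, a z * ζ z ω + (∑ z, a z * ζ z ω) * (∑ z, b z * ζ z ω))) := by
    funext ω; ring
  rw [he2]
  have hABint : Integrable (fun ω => (∑ z, a z * ζ z ω) * (∑ z, b z * ζ z ω)) μ := by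
    have he : (fun ω => (∑ z, a z * ζ z ω) * (∑ z, b z * ζ z ω))
        = fun ω => ∑ z, ∑ w, (a z * b w) * (ζ z ω * ζ w ω) := by
      funext ω
      rw [Finset.sum_mul_sum]
      exact Finset.sum_congr rfl fun z _ => Finset.sum_congr rfl fun w _ => by ring
    rw [he]
    exact integrable_finset_sum _ fun z _ => hABint' z
  have i4 : Integrable (fun ω => cb * (∑ z, a z * ζ z ω)
      + (∑ z, a z * ζ z ω) * (∑ z, b z * ζ z ω)) μ := (hAint.const_mul cb).add hABint
  have i5 : Integrable (fun ω => ca * (∑ z, b z * ζ z ω)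
      + (cb * (∑ z, a z * ζ z ω) + (∑ z, a z * ζ z ω) * (∑ z, b z * ζ z ω))) μ :=
    (hBint.const_mul ca).add i4
  rw [integral_add (integrable_const _) i5,
    integral_add (hBint.const_mul ca) i4,
    integral_add (hAint.const_mul cb) hABint]
  simp [integral_const_mul, hIA, hIB, hIAB]

end Integration

lemma trace_helper {N : ℕ} (A B : Matrix (Fin N) (Fin N) ℝ) :
    ∑ i, ∑ k, A i k * B i k = (A * Bᵀ).trace := by
  simp [Matrix.trace, Matrix.diag, Matrix.mul_apply, Matrix.transpose_apply]



theorem statement_1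
    {Ωs : Type*} [MeasurableSpace Ωs] (μ : Measure Ωs) [IsProbabilityMeasure μ]
    (N p1 p2 : ℕ) (hN : 0 < N) (hp1 : 0 < p1) (hp2 : 0 < p2)
    (W : Matrix (Fin N) (Fin N) ℝ) (hW : ∀ i, W i i = 0)
    (X : Matrix (Fin N) (Fin p1 ⊕ Fin p2) ℝ)
    (ρ0 : ℝ) (β0 : Fin p1 ⊕ Fin p2 → ℝ) (σ02 lam2 lamx2 : ℝ)
    (hσ : 0 < σ02) (hlam : 0 < lam2) (hlamx : 0 < lamx2)
    (hS0 : 0 < (Smat W ρ0).det)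
    (E ε : Ωs → Fin N → ℝ) (Ex : Ωs → Fin N → Fin p2 → ℝ)
    (hindep : iIndepFun (noiseFam E ε Ex) μ)
    (hmom : ∀ z, MemLp (noiseFam E ε Ex z) 4 μ)
    (hmean : ∀ z, ∫ ω, noiseFam E ε Ex z ω ∂μ = 0)
    (hEvar : ∀ i, ∫ ω, (E ω i) ^ 2 ∂μ = σ02)
    (hepsvar : ∀ i, ∫ ω, (ε ω i) ^ 2 ∂μ = lam2)
    (hExvar : ∀ i j, ∫ ω, (Ex ω i j) ^ 2 ∂μ = lamx2) :
    ∫ ω, deriv (fun ρ =>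
        nll W lam2 (Xobs X (Ex ω)) (Yobs W ρ0 X β0 (E ω) (ε ω)) ρ β0 σ02) ρ0 ∂μ
      = lam2 * lamx2 * (∑ k, β0 (Sum.inr k) ^ 2) *
          Matrix.trace ((Omat W lam2 ρ0 σ02)⁻¹ * W * (Smat W ρ0)ᵀ * (Omat W lam2 ρ0 σ02)⁻¹)
  := by
  classical
  set S0 := Smat W ρ0 with hS0def
  set O0 := Omat W lam2 ρ0 σ02 with hO0def
  have hSdet : S0.det ≠ 0 := hS0.ne'
  have hSu : IsUnit S0.det := isUnit_iff_ne_zero.mpr hSdet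
  have hΩpd : O0.PosDef := Omat_posDef W hlam hσ ρ0
  have hΩdet : O0.det ≠ 0 := hΩpd.det_pos.ne'
  have hΩu : IsUnit O0.det := isUnit_iff_ne_zero.mpr hΩdet
  have hΩsym : O0ᵀ = O0 := by
    have := hΩpd.1
    rwa [Matrix.IsHermitian, Matrix.conjTranspose_eq_transpose_of_trivial] at this
  have hΩisym : (O0⁻¹)ᵀ = O0⁻¹ := by rw [Matrix.transpose_nonsing_inv, hΩsym]
  set M : Matrix (Fin N) (Fin N) ℝ := O0⁻¹ * WSmat W ρ0 * O0⁻¹ with hMdef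
  set β2 : Fin p2 → ℝ := fun l => β0 (Sum.inr l) with hβ2
  set ζ : (Fin N ⊕ Fin N ⊕ Fin N × Fin p2) → Ωs → ℝ := noiseFam E ε Ex with hζdef
  -- step 1 : pointwise derivative
  have hptw : (fun ω => deriv (fun ρ =>
      nll W lam2 (Xobs X (Ex ω)) (Yobs W ρ0 X β0 (E ω) (ε ω)) ρ β0 σ02) ρ0)
      = fun ω => (S0⁻¹ * W).trace - (lam2/2) * (O0⁻¹ * WSmat W ρ0).trace
        + ((-(W *ᵥ Yobs W ρ0 X β0 (E ω) (ε ω))) ⬝ᵥ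
            (O0⁻¹ *ᵥ (S0 *ᵥ Yobs W ρ0 X β0 (E ω) (ε ω) - Xobs X (Ex ω) *ᵥ β0))
          + (lam2/2) * ((S0 *ᵥ Yobs W ρ0 X β0 (E ω) (ε ω) - Xobs X (Ex ω) *ᵥ β0) ⬝ᵥ
              (M *ᵥ (S0 *ᵥ Yobs W ρ0 X β0 (E ω) (ε ω) - Xobs X (Ex ω) *ᵥ β0)))) :=
    funext fun ω => (nll_hasDerivAt W (Xobs X (Ex ω)) (Yobs W ρ0 X β0 (E ω) (ε ω))
      β0 hσ hlam hS0).deriv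
  rw [hptw]
  -- step 2 : canonical representations
  have hsum_expand : ∀ (f g : Fin N → ℝ) (h : Fin N × Fin p2 → ℝ) (ω : Ωs),
      (∑ z, (Sum.elim f (Sum.elim g h) z) * ζ z ω)
        = ∑ k, f k * E ω k + ∑ k, g k * ε ω k
          + ∑ q : Fin N × Fin p2, h q * Ex ω q.1 q.2 := by
    intro f g h ω
    rw [Fintype.sum_sum_type, Fintype.sum_sum_type]
    simp [hζdef, noiseFam, add_assoc]
  -- residual vector in canonical form
  have hr0 : ∀ ω, S0 *ᵥ Yobs W ρ0 X β0 (E ω) (ε ω) - Xobs X (Ex ω) *ᵥ β0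
      = fun i => E ω i + ((S0 *ᵥ ε ω) i - ∑ l, Ex ω i l * β2 l) := by
    intro ω
    have hSY : S0 *ᵥ Yobs W ρ0 X β0 (E ω) (ε ω) = (X *ᵥ β0) + (E ω + S0 *ᵥ ε ω) := by
      rw [Yobs, Matrix.mulVec_add, Matrix.mulVec_mulVec, ← hS0def,
        Matrix.mul_nonsing_inv _ hSu, Matrix.one_mulVec]
      abel
    have hXo : Xobs X (Ex ω) *ᵥ β0 = (X *ᵥ β0) + fun i => ∑ l, Ex ω i l * β2 l := by
      funext i
      simp only [Xobs, Matrix.add_mulVec, Pi.add_apply]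
      congr 1
      simp only [Matrix.mulVec, dotProduct, Matrix.of_apply]
      rw [Fintype.sum_sum_type]
      simp [hβ2]
    rw [hSY, hXo]
    funext i
    simp only [Pi.sub_apply, Pi.add_apply]
    ring
  -- mulVec of residual
  have hrepA : ∀ (A : Matrix (Fin N) (Fin N) ℝ) (ω : Ωs) (i : Fin N),
      (A *ᵥ (fun k => E ω k + ((S0 *ᵥ ε ω) k - ∑ l, Ex ω k l * β2 l))) i
        = 0 + ∑ z, (Sum.elim (fun k => A i k) (Sum.elim (fun k => (A * S0) i k)
            (fun q => -(A i q.1 * β2 q.2))) z) * ζ z ω := by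
    intro A ω i
    rw [zero_add, hsum_expand]
    have e1 : (A *ᵥ fun k => E ω k + ((S0 *ᵥ ε ω) k - ∑ l, Ex ω k l * β2 l)) i
        = (∑ k, A i k * E ω k) + (∑ k, A i k * ∑ j, S0 k j * ε ω j)
          - ∑ k, A i k * (∑ l, Ex ω k l * β2 l) := by
      simp [Matrix.mulVec, dotProduct, mul_add, mul_sub, Finset.sum_add_distrib,
        Finset.sum_sub_distrib]
      ring
    have e2 : ∑ k, A i k * ∑ j, S0 k j * ε ω j = ∑ k, (A * S0) i k * ε ω k := by
      calc ∑ k, A i k * ∑ j, S0 k j * ε ω j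
          = ∑ k, ∑ j, A i k * (S0 k j * ε ω j) := by
            exact Finset.sum_congr rfl fun k _ => by rw [Finset.mul_sum]
        _ = ∑ j, ∑ k, A i k * (S0 k j * ε ω j) := Finset.sum_comm
        _ = ∑ k, (A * S0) i k * ε ω k := by
            refine Finset.sum_congr rfl fun j _ => ?_
            rw [Matrix.mul_apply, Finset.sum_mul]
            exact Finset.sum_congr rfl fun x _ => by ring
    have e3 : ∑ q : Fin N × Fin p2, -(A i q.1 * β2 q.2) * Ex ω q.1 q.2
        = - ∑ k, A i k * (∑ l, Ex ω k l * β2 l) := by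
      have e3' : ∑ q : Fin N × Fin p2, (A i q.1 * β2 q.2) * Ex ω q.1 q.2
          = ∑ k, A i k * (∑ l, Ex ω k l * β2 l) := by
        rw [Fintype.sum_prod_type]
        refine Finset.sum_congr rfl fun k _ => ?_
        rw [Finset.mul_sum]
        exact Finset.sum_congr rfl fun l _ => by ring
      rw [← e3']
      simp [neg_mul, Finset.sum_neg_distrib]
    rw [e1, e2, e3]
    ring
  -- moments at exponent 2
  have hmom2 : ∀ z, MemLp (ζ z) 2 μ := fun z =>
    (hmom z).mono_exponent (by norm_num)
  -- variances
  set vvar : (Fin N ⊕ Fin N ⊕ Fin N × Fin p2) → ℝ :=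
    Sum.elim (fun _ => σ02) (Sum.elim (fun _ => lam2) (fun _ => lamx2)) with hvvar
  have hvar : ∀ z, ∫ ω, (ζ z ω)^2 ∂μ = vvar z := by
    rintro (k | k | q)
    · simpa [hζdef, noiseFam, hvvar] using hEvar k
    · simpa [hζdef, noiseFam, hvvar] using hepsvar k
    · simpa [hζdef, noiseFam, hvvar] using hExvar q.1 q.2
  -- coefficient functions
  set αel : Fin N → (Fin N ⊕ Fin N ⊕ Fin N × Fin p2) → ℝ := fun i =>
    Sum.elim (fun k => -((W * S0⁻¹) i k)) (Sum.elim (fun k => -(W i k)) (fun _ => 0)) with hαel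
  set γel : Fin N → (Fin N ⊕ Fin N ⊕ Fin N × Fin p2) → ℝ := fun i =>
    Sum.elim (fun k => O0⁻¹ i k) (Sum.elim (fun k => (O0⁻¹ * S0) i k)
      (fun q => -(O0⁻¹ i q.1 * β2 q.2))) with hγel
  set ccel : Fin N → (Fin N ⊕ Fin N ⊕ Fin N × Fin p2) → ℝ := fun i =>
    Sum.elim (fun k => (1 : Matrix (Fin N) (Fin N) ℝ) i k)
      (Sum.elim (fun k => ((1 : Matrix (Fin N) (Fin N) ℝ) * S0) i k)
      (fun q => -((1 : Matrix (Fin N) (Fin N) ℝ) i q.1 * β2 q.2))) with hccel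
  set ddel : Fin N → (Fin N ⊕ Fin N ⊕ Fin N × Fin p2) → ℝ := fun i =>
    Sum.elim (fun k => M i k) (Sum.elim (fun k => (M * S0) i k)
      (fun q => -(M i q.1 * β2 q.2))) with hddel
  set caf : Fin N → ℝ := fun i => (-((W * S0⁻¹) *ᵥ (X *ᵥ β0))) i with hcaf
  -- representation of the first factor
  have hrep_a : ∀ (ω : Ωs) (i : Fin N), (-(W *ᵥ Yobs W ρ0 X β0 (E ω) (ε ω))) i
      = caf i + ∑ z, αel i z * ζ z ω := by
    intro ω i
    have hYv : W *ᵥ Yobs W ρ0 X β0 (E ω) (ε ω)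
        = (W * S0⁻¹) *ᵥ (X *ᵥ β0) + ((W * S0⁻¹) *ᵥ E ω + W *ᵥ ε ω) := by
      rw [Yobs, Matrix.mulVec_add, Matrix.mulVec_mulVec, ← hS0def, Matrix.mulVec_add]
      abel
    rw [hαel, hsum_expand, Pi.neg_apply, hYv, hcaf]
    simp only [Pi.add_apply, Pi.neg_apply]
    have u1 : ∑ k, -((W * S0⁻¹) i k) * E ω k = -(((W * S0⁻¹) *ᵥ E ω) i) := by
      simp [Matrix.mulVec, dotProduct, Finset.sum_neg_distrib]
    have u2 : ∑ k, -(W i k) * ε ω k = -((W *ᵥ ε ω) i) := by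
      simp [Matrix.mulVec, dotProduct, Finset.sum_neg_distrib]
    have u3 : ∑ q : Fin N × Fin p2, (0:ℝ) * Ex ω q.1 q.2 = 0 := by simp
    rw [u1, u2, u3]
    ring
  -- the two quadratic terms in canonical product form
  have hG3eq : ∀ ω, (-(W *ᵥ Yobs W ρ0 X β0 (E ω) (ε ω))) ⬝ᵥ
        (O0⁻¹ *ᵥ (S0 *ᵥ Yobs W ρ0 X β0 (E ω) (ε ω) - Xobs X (Ex ω) *ᵥ β0))
      = ∑ i, (caf i + ∑ z, αel i z * ζ z ω) * (0 + ∑ z, γel i z * ζ z ω) := by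
    intro ω
    rw [dotProduct]
    refine Finset.sum_congr rfl fun i _ => ?_
    rw [hrep_a ω i, hr0 ω, hrepA O0⁻¹ ω i, hγel]
  have hG4eq : ∀ ω, (S0 *ᵥ Yobs W ρ0 X β0 (E ω) (ε ω) - Xobs X (Ex ω) *ᵥ β0) ⬝ᵥ
        (M *ᵥ (S0 *ᵥ Yobs W ρ0 X β0 (E ω) (ε ω) - Xobs X (Ex ω) *ᵥ β0))
      = ∑ i, (0 + ∑ z, ccel i z * ζ z ω) * (0 + ∑ z, ddel i z * ζ z ω) := by
    intro ω
    rw [dotProduct, hr0 ω]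
    refine Finset.sum_congr rfl fun i _ => ?_
    have h1v : (fun k => E ω k + ((S0 *ᵥ ε ω) k - ∑ l, Ex ω k l * β2 l)) i
        = ((1 : Matrix (Fin N) (Fin N) ℝ) *ᵥ
            (fun k => E ω k + ((S0 *ᵥ ε ω) k - ∑ l, Ex ω k l * β2 l))) i := by
      rw [Matrix.one_mulVec]
    rw [h1v, hrepA (1 : Matrix (Fin N) (Fin N) ℝ) ω i, hrepA M ω i, hccel, hddel]
  -- integrability
  have hIntA : ∀ i : Fin N, Integrable
      (fun ω => (caf i + ∑ z, αel i z * ζ z ω) * (0 + ∑ z, γel i z * ζ z ω)) μ :=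
    fun i => integrable_affine_mul hmom2 _ _ _ _
  have hIntB : ∀ i : Fin N, Integrable
      (fun ω => (0 + ∑ z, ccel i z * ζ z ω) * (0 + ∑ z, ddel i z * ζ z ω)) μ :=
    fun i => integrable_affine_mul hmom2 _ _ _ _
  have hFaInt : Integrable (fun ω => ∑ i,
      (caf i + ∑ z, αel i z * ζ z ω) * (0 + ∑ z, γel i z * ζ z ω)) μ :=
    integrable_finset_sum _ (fun i _ => hIntA i)
  have hFbInt : Integrable (fun ω => ∑ i,
      (0 + ∑ z, ccel i z * ζ z ω) * (0 + ∑ z, ddel i z * ζ z ω)) μ :=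
    integrable_finset_sum _ (fun i _ => hIntB i)
  -- rewrite the integrand
  have heq2 : (fun ω => (S0⁻¹ * W).trace - (lam2/2) * (O0⁻¹ * WSmat W ρ0).trace
        + ((-(W *ᵥ Yobs W ρ0 X β0 (E ω) (ε ω))) ⬝ᵥ
            (O0⁻¹ *ᵥ (S0 *ᵥ Yobs W ρ0 X β0 (E ω) (ε ω) - Xobs X (Ex ω) *ᵥ β0))
          + (lam2/2) * ((S0 *ᵥ Yobs W ρ0 X β0 (E ω) (ε ω) - Xobs X (Ex ω) *ᵥ β0) ⬝ᵥ
              (M *ᵥ (S0 *ᵥ Yobs W ρ0 X β0 (E ω) (ε ω) - Xobs X (Ex ω) *ᵥ β0)))))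
      = fun ω => ((S0⁻¹ * W).trace - (lam2/2) * (O0⁻¹ * WSmat W ρ0).trace)
        + ((∑ i, (caf i + ∑ z, αel i z * ζ z ω) * (0 + ∑ z, γel i z * ζ z ω))
          + (lam2/2) * ∑ i, (0 + ∑ z, ccel i z * ζ z ω) * (0 + ∑ z, ddel i z * ζ z ω)) := by
    funext ω
    rw [hG3eq ω, hG4eq ω]
  rw [heq2]
  -- split the integral
  have i6 : Integrable (fun ω => (∑ i, (caf i + ∑ z, αel i z * ζ z ω)
        * (0 + ∑ z, γel i z * ζ z ω))
      + (lam2/2) * ∑ i, (0 + ∑ z, ccel i z * ζ z ω) * (0 + ∑ z, ddel i z * ζ z ω)) μ :=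
    hFaInt.add (hFbInt.const_mul _)
  rw [integral_add (integrable_const _) i6, integral_add hFaInt (hFbInt.const_mul _),
    integral_const_mul, integral_finset_sum _ (fun i _ => hIntA i),
    integral_finset_sum _ (fun i _ => hIntB i), integral_const]
  have hIa : ∀ i : Fin N, ∫ ω, (caf i + ∑ z, αel i z * ζ z ω)
        * (0 + ∑ z, γel i z * ζ z ω) ∂μ
      = ∑ z, αel i z * γel i z * vvar z := by
    intro i
    rw [integral_affine_mul hindep hmom2 hmean]
    rw [mul_zero, zero_add]
    exact Finset.sum_congr rfl fun z _ => by rw [hvar z]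
  have hIb : ∀ i : Fin N, ∫ ω, (0 + ∑ z, ccel i z * ζ z ω)
        * (0 + ∑ z, ddel i z * ζ z ω) ∂μ
      = ∑ z, ccel i z * ddel i z * vvar z := by
    intro i
    rw [integral_affine_mul hindep hmom2 hmean]
    rw [mul_zero, zero_add]
    exact Finset.sum_congr rfl fun z _ => by rw [hvar z]
  simp only [hIa, hIb]
  rw [probReal_univ, one_smul]
  have pull : ∀ (c : ℝ) (f g : Fin N → ℝ), (∑ k, -(f k) * g k * c) = -(c * ∑ k, f k * g k) := by
    intro c f g
    rw [Finset.mul_sum, ← Finset.sum_neg_distrib]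
    exact Finset.sum_congr rfl fun k _ => by ring
  have pullp : ∀ (c : ℝ) (f g : Fin N → ℝ), (∑ k, f k * g k * c) = c * ∑ k, f k * g k := by
    intro c f g
    rw [Finset.mul_sum]
    exact Finset.sum_congr rfl fun k _ => by ring
  have pull2 : ∀ (c : ℝ) (f g : Fin N → ℝ) (h : Fin p2 → ℝ),
      (∑ q : Fin N × Fin p2, (-(f q.1 * h q.2)) * (-(g q.1 * h q.2)) * c)
        = c * (∑ l, h l ^ 2) * ∑ k, f k * g k := by
    intro c f g h
    rw [Fintype.sum_prod_type]
    calc ∑ k, ∑ l, (-(f k * h l)) * (-(g k * h l)) * c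
        = ∑ k, c * (∑ l, h l ^ 2) * (f k * g k) := by
          refine Finset.sum_congr rfl fun k _ => ?_
          rw [Finset.mul_sum, Finset.sum_mul]
          exact Finset.sum_congr rfl fun l _ => by ring
      _ = c * (∑ l, h l ^ 2) * ∑ k, f k * g k := (Finset.mul_sum _ _ _).symm
  have hSA : ∀ i : Fin N, ∑ z, αel i z * γel i z * vvar z
      = -(σ02 * ∑ k, (W * S0⁻¹) i k * O0⁻¹ i k)
        - lam2 * ∑ k, W i k * (O0⁻¹ * S0) i k := by
    intro i
    rw [hαel, hγel, hvvar, Fintype.sum_sum_type, Fintype.sum_sum_type]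
    simp only [Sum.elim_inl, Sum.elim_inr]
    rw [pull σ02 _ _, pull lam2 _ _]
    simp only [zero_mul, Finset.sum_const_zero, add_zero]
    ring
  have hSB : ∀ i : Fin N, ∑ z, ccel i z * ddel i z * vvar z
      = σ02 * ∑ k, (1 : Matrix (Fin N) (Fin N) ℝ) i k * M i k
        + lam2 * ∑ k, ((1 : Matrix (Fin N) (Fin N) ℝ) * S0) i k * (M * S0) i k
        + lamx2 * (∑ l, β2 l ^ 2) * ∑ k, (1 : Matrix (Fin N) (Fin N) ℝ) i k * M i k := by
    intro i
    rw [hccel, hddel, hvvar, Fintype.sum_sum_type, Fintype.sum_sum_type]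
    simp only [Sum.elim_inl, Sum.elim_inr]
    rw [pullp σ02 _ _, pullp lam2 _ _, pull2 lamx2 _ _ _]
    ring
  have hSA2 : ∑ i, ∑ z, αel i z * γel i z * vvar z
      = -(σ02 * ((W * S0⁻¹) * (O0⁻¹)ᵀ).trace) - lam2 * (W * ((O0⁻¹ * S0)ᵀ)).trace := by
    rw [Finset.sum_congr rfl fun i _ => hSA i]
    simp only [Finset.sum_sub_distrib, Finset.sum_neg_distrib, ← Finset.mul_sum]
    rw [trace_helper, trace_helper]
  have hSB2 : ∑ i, ∑ z, ccel i z * ddel i z * vvar z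
      = σ02 * ((1 : Matrix (Fin N) (Fin N) ℝ) * Mᵀ).trace
        + lam2 * (((1 : Matrix (Fin N) (Fin N) ℝ) * S0) * ((M * S0)ᵀ)).trace
        + lamx2 * (∑ l, β2 l ^ 2) * ((1 : Matrix (Fin N) (Fin N) ℝ) * Mᵀ).trace := by
    rw [Finset.sum_congr rfl fun i _ => hSB i]
    simp only [Finset.sum_add_distrib, ← Finset.mul_sum]
    rw [trace_helper, trace_helper]
  rw [hSA2, hSB2]
  -- trace identities
  have hO0expand : O0 = σ02 • (1 : Matrix (Fin N) (Fin N) ℝ) + lam2 • (S0 * S0ᵀ) := by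
    rw [hO0def, hS0def]; rfl
  have hidA : (S0⁻¹ * W).trace
      = σ02 * ((W * S0⁻¹) * (O0⁻¹)ᵀ).trace + lam2 * (W * ((O0⁻¹ * S0)ᵀ)).trace := by
    have e0 : (O0⁻¹ * S0)ᵀ = S0ᵀ * O0⁻¹ := by rw [Matrix.transpose_mul, hΩisym]
    have e1 : (W * S0⁻¹) * O0 = σ02 • (W * S0⁻¹) + lam2 • (W * S0ᵀ) := by
      rw [hO0expand, Matrix.mul_add, Matrix.mul_smul, Matrix.mul_one, Matrix.mul_smul]
      congr 2
      rw [Matrix.mul_assoc, ← Matrix.mul_assoc S0⁻¹ S0 S0ᵀ,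
        Matrix.nonsing_inv_mul _ hSu, Matrix.one_mul]
    calc (S0⁻¹ * W).trace = (W * S0⁻¹).trace := Matrix.trace_mul_comm _ _
      _ = ((W * S0⁻¹) * (O0 * O0⁻¹)).trace := by
          rw [Matrix.mul_nonsing_inv _ hΩu, Matrix.mul_one]
      _ = (((W * S0⁻¹) * O0) * O0⁻¹).trace := by rw [← Matrix.mul_assoc]
      _ = ((σ02 • (W * S0⁻¹) + lam2 • (W * S0ᵀ)) * O0⁻¹).trace := by rw [e1]
      _ = σ02 * ((W * S0⁻¹) * (O0⁻¹)ᵀ).trace + lam2 * (W * ((O0⁻¹ * S0)ᵀ)).trace := by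
          rw [Matrix.add_mul, Matrix.smul_mul, Matrix.smul_mul, Matrix.trace_add,
            Matrix.trace_smul, Matrix.trace_smul, hΩisym, e0, Matrix.mul_assoc W S0ᵀ O0⁻¹]
          simp [smul_eq_mul]
  have htrM : ((1 : Matrix (Fin N) (Fin N) ℝ) * Mᵀ).trace = M.trace := by
    rw [Matrix.one_mul, Matrix.trace_transpose]
  have hidB : σ02 * M.trace
        + lam2 * (((1 : Matrix (Fin N) (Fin N) ℝ) * S0) * ((M * S0)ᵀ)).trace
      = (O0⁻¹ * WSmat W ρ0).trace := by
    have e2 : (((1 : Matrix (Fin N) (Fin N) ℝ) * S0) * ((M * S0)ᵀ)).trace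
        = (M * (S0 * S0ᵀ)).trace := by
      calc (((1 : Matrix (Fin N) (Fin N) ℝ) * S0) * ((M * S0)ᵀ)).trace
          = (S0 * (S0ᵀ * Mᵀ)).trace := by rw [Matrix.one_mul, Matrix.transpose_mul]
        _ = ((S0 * S0ᵀ) * Mᵀ).trace := by rw [← Matrix.mul_assoc]
        _ = ((M * (S0 * S0ᵀ))ᵀ).trace := by
            rw [Matrix.transpose_mul M (S0 * S0ᵀ), Matrix.transpose_mul S0 S0ᵀ,
              Matrix.transpose_transpose]
        _ = (M * (S0 * S0ᵀ)).trace := Matrix.trace_transpose _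
    rw [e2]
    have e3 : M * O0 = O0⁻¹ * WSmat W ρ0 := by
      rw [hMdef, Matrix.mul_assoc, Matrix.nonsing_inv_mul _ hΩu, Matrix.mul_one]
    calc σ02 * M.trace + lam2 * (M * (S0 * S0ᵀ)).trace
        = (M * O0).trace := by
          rw [hO0expand, Matrix.mul_add, Matrix.mul_smul, Matrix.mul_one,
            Matrix.mul_smul, Matrix.trace_add, Matrix.trace_smul, Matrix.trace_smul]
          simp [smul_eq_mul]
      _ = (O0⁻¹ * WSmat W ρ0).trace := by rw [e3]
  have hidC : M.trace = 2 * (O0⁻¹ * W * S0ᵀ * O0⁻¹).trace := by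
    have eWS : WSmat W ρ0 = W * S0ᵀ + S0 * Wᵀ := by rw [WSmat, hS0def]
    have esplit : M = O0⁻¹ * (W * S0ᵀ) * O0⁻¹ + O0⁻¹ * (S0 * Wᵀ) * O0⁻¹ := by
      rw [hMdef, eWS, Matrix.mul_add, Matrix.add_mul]
    have etr : (O0⁻¹ * (S0 * Wᵀ) * O0⁻¹).trace = (O0⁻¹ * (W * S0ᵀ) * O0⁻¹).trace := by
      have h1 : (O0⁻¹ * (S0 * Wᵀ) * O0⁻¹)ᵀ = O0⁻¹ * (W * S0ᵀ) * O0⁻¹ := by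
        rw [Matrix.transpose_mul, Matrix.transpose_mul, Matrix.transpose_mul,
          Matrix.transpose_transpose, hΩisym, ← Matrix.mul_assoc]
      rw [← h1, Matrix.trace_transpose]
    rw [esplit, Matrix.trace_add, etr, ← Matrix.mul_assoc O0⁻¹ W S0ᵀ]
    ring
  rw [htrM, hidA, hidB, hidC]
  simp only [hβ2]
  ring


end PSAR
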